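/- Let T_n be the 2n×2n block tridiagonal matrix with symmetric 2×2 diagonal blocks A_i = [[a_i, b_i],[b_i, a_i]], superdiagonal blocks p_i·J_2 and subdiagonal blocks q_i·J_2. Then det T_n = h̃_n · ∏_{i=1}^n (a_i − b_i), where h̃_n is the determinant of the n×n tridiagonal matrix with diagonal entries a_i + b_i, superdiagonal 2p_i, and subdiagonal 2q_i. -/

import Mathlib

/-- The `n × n` tridiagonal matrix with diagonal `a 1, …, a n`,
superdiagonal `p 1, …, p (n-1)` and subdiagonal `q 1, …, q (n-1)`. -/
def tridiag (a p q : ℕ → ℝ) (n : ℕ) : Matrix (Fin n) (Fin n) ℝ :=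
  Matrix.of fun i j =>
    if (i : ℕ) = (j : ℕ) then a (i + 1)
    else if (j : ℕ) = (i : ℕ) + 1 then p ((i : ℕ) + 1)
    else if (i : ℕ) = (j : ℕ) + 1 then q ((j : ℕ) + 1)
    else 0

/-- The `2n × 2n` block tridiagonal matrix with symmetric `2 × 2` diagonal blocks
`A_i = !![a i, b i; b i, a i]`, superdiagonal blocks `p i • J₂` and
subdiagonal blocks `q i • J₂`. -/
def blockTridiagSym (a b p q : ℕ → ℝ) (n : ℕ) :
    Matrix (Fin n × Fin 2) (Fin n × Fin 2) ℝ :=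
  Matrix.of fun is jt =>
    if (is.1 : ℕ) = (jt.1 : ℕ) then
      (!![a ((is.1 : ℕ) + 1), b ((is.1 : ℕ) + 1);
          b ((is.1 : ℕ) + 1), a ((is.1 : ℕ) + 1)]) is.2 jt.2
    else if (jt.1 : ℕ) = (is.1 : ℕ) + 1 then p ((is.1 : ℕ) + 1)
    else if (is.1 : ℕ) = (jt.1 : ℕ) + 1 then q ((jt.1 : ℕ) + 1)
    else 0

open Matrix Kronecker in
private lemma key_conj (a b p q : ℕ → ℝ) (n : ℕ) :
    ((1 : Matrix (Fin n) (Fin n) ℝ) ⊗ₖ !![(1:ℝ),1;1,-1]) * blockTridiagSym a b p q n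
      * ((1 : Matrix (Fin n) (Fin n) ℝ) ⊗ₖ !![(1:ℝ),1;1,-1])
    = (2:ℝ) • Matrix.blockDiagonal
        ![tridiag (fun i => a i + b i) (fun i => 2 * p i) (fun i => 2 * q i) n,
          Matrix.diagonal fun i : Fin n => a ((i:ℕ)+1) - b ((i:ℕ)+1)] := by
  ext ⟨i, s⟩ ⟨j, t⟩
  simp only [Matrix.mul_apply, Fintype.sum_prod_type, Matrix.kroneckerMap_apply,
    Matrix.one_apply, ite_mul, mul_ite, zero_mul, mul_zero,
    Finset.sum_ite_eq, Finset.sum_ite_eq', Finset.mem_univ, if_true]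
  rw [Finset.sum_comm]
  simp only [Finset.sum_ite_eq', Finset.mem_univ, if_true]
  simp only [Fin.sum_univ_two, Finset.sum_add_distrib, Finset.sum_ite_eq,
    Matrix.blockDiagonal_apply, Matrix.smul_apply,
    blockTridiagSym, tridiag, Matrix.of_apply, smul_eq_mul,
    Matrix.cons_val', Matrix.cons_val_zero, Matrix.cons_val_one, Matrix.head_cons,
    Matrix.empty_val', Matrix.cons_val_fin_one, Matrix.head_fin_const, one_mul]
  fin_cases s <;> fin_cases t <;>
    simp only [Matrix.cons_val_zero, Matrix.cons_val_one, Matrix.head_cons,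
      Matrix.diagonal_apply, Fin.zero_eta, Fin.mk_one, Fin.ext_iff, Fin.val_zero, Fin.val_one,
      Matrix.of_apply, Finset.mem_univ, Matrix.vecHead, Matrix.vecTail, mul_one, mul_neg,
      neg_neg, one_mul, Nat.zero_ne_one, Nat.one_ne_zero, if_true, if_false] <;>
  split_ifs <;> first | ring | (exfalso; omega)

open Matrix Kronecker in
theorem stmt_7 (a b p q : ℕ → ℝ) (n : ℕ) :
    (blockTridiagSym a b p q n).det
      = (tridiag (fun i => a i + b i) (fun i => 2 * p i) (fun i => 2 * q i) n).det
          * ∏ i ∈ Finset.Icc 1 n, (a i - b i) := by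
  have hS : ((1 : Matrix (Fin n) (Fin n) ℝ) ⊗ₖ !![(1:ℝ),1;1,-1]).det = (-2)^n := by
    rw [Matrix.det_kronecker]
    simp [Matrix.det_fin_two_of]
    norm_num
  have h := congrArg Matrix.det (key_conj a b p q n)
  rw [Matrix.det_mul, Matrix.det_mul, hS, Matrix.det_smul, Matrix.det_blockDiagonal] at h
  simp only [Fin.prod_univ_two, Matrix.cons_val_zero, Matrix.cons_val_one, Matrix.head_cons,
    Matrix.det_diagonal, Fintype.card_prod, Fintype.card_fin] at h
  have hprod : ∏ i : Fin n, (a ((i:ℕ)+1) - b ((i:ℕ)+1)) = ∏ i ∈ Finset.Icc 1 n, (a i - b i) := by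
    have h1 := Fin.prod_univ_eq_prod_range (fun k => a (k+1) - b (k+1)) n
    rw [h1, ← Finset.Ico_add_one_right_eq_Icc, Finset.prod_Ico_eq_prod_range]
    simp [add_comm]
  rw [hprod] at h
  have h4 : ((-2:ℝ))^n * ((-2:ℝ))^n = (2:ℝ)^(n*2) := by
    rw [← mul_pow, pow_mul']; norm_num
  have h2 : ((2:ℝ)^(n*2)) ≠ 0 := by positivity
  apply mul_left_cancel₀ h2
  linear_combination h - (blockTridiagSym a b p q n).det * h4
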